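/- Let M be a nonnegative symmetric d×d real matrix and let h ∈ ℝ^d be a nonnegative vector that is strictly positive on supp(M). Suppose the restriction of M to supp(M) is irreducible, and suppose that for each i ∈ supp(M) we are given a nonnegative symmetric d×d real matrix M⟨i⟩ and a linear map T⟨i⟩ : ℝ^d → ℝ^d such that: (Inheritance) (Mv)_i = ⟨T⟨i⟩v, M⟨i⟩ T⟨i⟩h⟩ for every i ∈ supp(M) and every v ∈ ℝ^d; (Pullback) Σ_{i ∈ supp(M)} h_i · ⟨T⟨i⟩v, M⟨i⟩ T⟨i⟩v⟩ ≥ ⟨v, Mv⟩ for every v ∈ ℝ^d; and each matrix M⟨i⟩ is hyperbolic. Then M is hyperbolic. -/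

import Mathlib

open scoped Classical BigOperators
open Matrix

noncomputable section

/-- A symmetric real matrix `M` is hyperbolic if
`⟨v, Mw⟩² ≥ ⟨v, Mv⟩·⟨w, Mw⟩` for all `v, w` with `⟨w, Mw⟩ > 0`. -/
def IsHyperbolic {d : ℕ} (M : Matrix (Fin d) (Fin d) ℝ) : Prop :=
  ∀ v w : Fin d → ℝ, 0 < w ⬝ᵥ M.mulVec w →
    (v ⬝ᵥ M.mulVec v) * (w ⬝ᵥ M.mulVec w) ≤ (v ⬝ᵥ M.mulVec w) ^ 2

/-- The support of a matrix: the set of indices whose row (equivalently, for a symmetric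
matrix, column) is nonzero. -/
def matSupp {d : ℕ} (M : Matrix (Fin d) (Fin d) ℝ) : Finset (Fin d) :=
  Finset.univ.filter (fun i => ∃ j, M i j ≠ 0)

private lemma sum_dotProduct' {n d : ℕ} (f : Fin n → Fin d → ℝ) (w : Fin d → ℝ) :
    (∑ k, f k) ⬝ᵥ w = ∑ k, f k ⬝ᵥ w := by
  simp only [dotProduct, Finset.sum_apply, Finset.sum_mul]
  rw [Finset.sum_comm]

private lemma dotProduct_sum' {n d : ℕ} (w : Fin d → ℝ) (f : Fin n → Fin d → ℝ) :
    w ⬝ᵥ (∑ k, f k) = ∑ k, w ⬝ᵥ f k := by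
  simp only [dotProduct, Finset.sum_apply, Finset.mul_sum]
  rw [Finset.sum_comm]

private lemma mulVec_sum' {n d : ℕ} (N : Matrix (Fin d) (Fin d) ℝ) (f : Fin n → Fin d → ℝ) :
    N *ᵥ (∑ k, f k) = ∑ k, N *ᵥ f k := by
  funext i
  simp only [mulVec, Finset.sum_apply]
  exact dotProduct_sum' (N i) f

/-- Perron–Frobenius-type comparison: an eigenvector of a nonnegative matrix, irreducible on
its support `S`, with eigenvalue `≥ 1`, where `z` is a fixed positive eigenvector for
eigenvalue `1`, must be a multiple of `z`. -/
private lemma perron_aux {d : ℕ} (N : Matrix (Fin d) (Fin d) ℝ) (z : Fin d → ℝ)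
    (S : Finset (Fin d))
    (hNnn : ∀ i j, 0 ≤ N i j)
    (hzpos : ∀ i ∈ S, 0 < z i)
    (hz0 : ∀ i ∉ S, z i = 0)
    (hrow : ∀ i ∉ S, ∀ j, N i j = 0)
    (hNz : N *ᵥ z = z)
    (hconn : ∀ i ∈ S, ∀ j ∈ S, Relation.ReflTransGen (fun a b => N a b ≠ 0) i j)
    (u : Fin d → ℝ) (μ : ℝ) (hu : N *ᵥ u = μ • u) (hμ : 1 ≤ μ) :
    ∃ c : ℝ, u = c • z := by
  have hμpos : (0:ℝ) < μ := lt_of_lt_of_le one_pos hμ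
  have hu0 : ∀ i ∉ S, u i = 0 := by
    intro i hi
    have : (N *ᵥ u) i = 0 := by
      simp only [mulVec, dotProduct]
      exact Finset.sum_eq_zero fun j _ => by rw [hrow i hi j, zero_mul]
    rw [hu] at this
    simpa [hμpos.ne'] using this
  by_cases hS : S.Nonempty
  · obtain ⟨i0, hi0, hmax⟩ := S.exists_max_image (fun i => |u i| / z i) hS
    set c : ℝ := |u i0| / z i0 with hc
    have hc0 : 0 ≤ c := div_nonneg (abs_nonneg _) (hzpos i0 hi0).le
    by_cases hcz : c = 0
    · refine ⟨0, funext fun i => ?_⟩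
      by_cases hi : i ∈ S
      · have hle := hmax i hi
        rw [hcz] at hle
        have hz := hzpos i hi
        have : |u i| ≤ 0 := by
          have := (div_le_iff₀ hz).mp hle; simpa using this
        simpa using le_antisymm this (abs_nonneg _)
      · simp [hu0 i hi]
    · have hcpos : 0 < c := lt_of_le_of_ne hc0 (Ne.symm hcz)
      set s : ℝ := if 0 ≤ u i0 then 1 else -1 with hs
      have hss : s * s = 1 := by
        rcases le_or_gt 0 (u i0) with h'|h'
        · simp [hs, if_pos h']
        · rw [hs, if_neg (not_le.mpr h')]; norm_num
      have habs : |s| = 1 := by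
        rcases le_or_gt 0 (u i0) with h'|h'
        · simp [hs, if_pos h']
        · rw [hs, if_neg (not_le.mpr h')]; norm_num
      set u' : Fin d → ℝ := s • u with hu'
      have hu'eig : N *ᵥ u' = μ • u' := by
        rw [hu', mulVec_smul, hu, smul_comm]
      have hu'i0 : u' i0 = c * z i0 := by
        have hzne := (hzpos i0 hi0).ne'
        have habs0 : |u i0| = c * z i0 := by rw [hc, div_mul_cancel₀ _ hzne]
        rcases le_or_gt 0 (u i0) with h'|h'
        · simp only [hu', hs, if_pos h', Pi.smul_apply, smul_eq_mul, one_mul]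
          rwa [abs_of_nonneg h'] at habs0
        · simp only [hu', hs, if_neg (not_le.mpr h'), Pi.smul_apply, smul_eq_mul, neg_one_mul]
          rwa [abs_of_neg h'] at habs0
      have hu'le : ∀ j, u' j ≤ c * z j := by
        intro j
        by_cases hj : j ∈ S
        · have habs' : |u' j| = |u j| := by
            simp only [hu', Pi.smul_apply, smul_eq_mul, abs_mul, habs, one_mul]
          have h1 : u' j ≤ |u j| := by
            calc u' j ≤ |u' j| := le_abs_self _
            _ = |u j| := habs'
          have h2 : |u j| ≤ c * z j := by
            have hle := hmax j hj
            have hz := hzpos j hj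
            calc |u j| = (|u j| / z j) * z j := by field_simp
            _ ≤ c * z j := mul_le_mul_of_nonneg_right hle hz.le
          exact h1.trans h2
        · simp [hu0 j hj, hu', hz0 j hj]
      have key : ∀ j ∈ S, u' j = c * z j → ∀ k, N j k ≠ 0 → u' k = c * z k := by
        intro j hj hje k hk
        have hsum : (N *ᵥ u') j ≤ (N *ᵥ (c • z)) j := by
          simp only [mulVec, dotProduct]
          refine Finset.sum_le_sum fun l _ => ?_
          exact mul_le_mul_of_nonneg_left (by simpa using hu'le l) (hNnn j l)
        have hNcz : (N *ᵥ (c • z)) j = c * z j := by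
          rw [mulVec_smul, hNz]; simp
        have hμj : (N *ᵥ u') j = μ * u' j := by rw [hu'eig]; simp
        have h3 : μ * (c * z j) ≤ c * z j := by
          have h4 := hsum
          rw [hμj, hNcz, hje] at h4
          exact h4
        have hzj := hzpos j hj
        have hμ1 : μ = 1 := by
          have : μ ≤ 1 := by nlinarith [mul_pos hcpos hzj]
          exact le_antisymm this hμ
        have heqsum : ∑ l, N j l * (c * z l - u' l) = 0 := by
          have e1 : ∑ l, N j l * (c * z l) = c * z j := by
            simpa [mulVec, dotProduct, Finset.mul_sum] using hNcz
          have e2 : ∑ l, N j l * u' l = c * z j := by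
            have h5 : (N *ᵥ u') j = c * z j := by rw [hμj, hμ1, one_mul, hje]
            simpa [mulVec, dotProduct] using h5
          have : ∑ l, N j l * (c * z l - u' l)
              = (∑ l, N j l * (c * z l)) - ∑ l, N j l * u' l := by
            rw [← Finset.sum_sub_distrib]
            exact Finset.sum_congr rfl fun l _ => by ring
          rw [this, e1, e2, sub_self]
        have hterm : ∀ l ∈ Finset.univ, 0 ≤ N j l * (c * z l - u' l) :=
          fun l _ => mul_nonneg (hNnn j l) (sub_nonneg.mpr (hu'le l))
        have h6 := (Finset.sum_eq_zero_iff_of_nonneg hterm).mp heqsum k (Finset.mem_univ k)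
        have hNjk : 0 < N j k := lt_of_le_of_ne (hNnn j k) (Ne.symm hk)
        rcases mul_eq_zero.mp h6 with h'|h'
        · exact absurd h' hNjk.ne'
        · linarith [sub_eq_zero.mp h']
      have hall : ∀ j, Relation.ReflTransGen (fun a b => N a b ≠ 0) i0 j → u' j = c * z j := by
        intro j hr
        induction hr with
        | refl => exact hu'i0
        | @tail b k hab hrel ih =>
          have hbS : b ∈ S := by
            by_contra hbS
            exact hrel (hrow b hbS k)
          exact key b hbS ih k hrel
      refine ⟨s * c, funext fun i => ?_⟩
      by_cases hi : i ∈ S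
      · have h7 := hall i (hconn i0 hi0 i hi)
        have h8 : u i = s * (c * z i) := by
          calc u i = s * s * u i := by rw [hss, one_mul]
          _ = s * (s * u i) := by ring
          _ = s * u' i := by simp [hu']
          _ = s * (c * z i) := by rw [h7]
        simp only [Pi.smul_apply, smul_eq_mul, h8]; ring
      · simp [hu0 i hi, hz0 i hi]
  · refine ⟨0, funext fun i => ?_⟩
    have : i ∉ S := fun hmem => hS ⟨i, hmem⟩
    simp [hu0 i this]

/-- Spectral argument: if `N` is symmetric with `N ≼ N²` and every eigenvector with
eigenvalue `≥ 1` is a multiple of `z`, then the quadratic form of `N` is nonpositive on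
the orthogonal complement of `z`. -/
private lemma spectral_aux {d : ℕ} (N : Matrix (Fin d) (Fin d) ℝ) (hsymm : N.IsSymm)
    (z : Fin d → ℝ)
    (hsq : ∀ x : Fin d → ℝ, x ⬝ᵥ (N *ᵥ x) ≤ (N *ᵥ x) ⬝ᵥ (N *ᵥ x))
    (heig : ∀ (u : Fin d → ℝ) (μ : ℝ), N *ᵥ u = μ • u → 1 ≤ μ → ∃ c : ℝ, u = c • z)
    (x : Fin d → ℝ) (hxz : x ⬝ᵥ z = 0) :
    x ⬝ᵥ (N *ᵥ x) ≤ 0 := by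
  have hN : N.IsHermitian := by
    ext i j
    rw [Matrix.conjTranspose_apply, star_trivial]
    have := congrFun (congrFun hsymm i) j
    rwa [Matrix.transpose_apply] at this
  set b := hN.eigenvectorBasis with hb
  set lam := hN.eigenvalues with hlam
  set u : Fin d → (Fin d → ℝ) := fun k => ⇑(b k) with hudef
  have heigvec : ∀ k, N *ᵥ u k = lam k • u k := fun k => hN.mulVec_eigenvectorBasis k
  have horth : ∀ k l, u k ⬝ᵥ u l = if k = l then 1 else 0 := by
    intro k l
    have := orthonormal_iff_ite.mp b.orthonormal k l
    rw [PiLp.inner_apply] at this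
    simp only [RCLike.inner_apply, starRingEnd_apply, star_trivial] at this
    show ∑ i, u k i * u l i = _
    refine Eq.trans (Finset.sum_congr rfl fun i _ => by ring) this
  set c : Fin d → ℝ := fun k => u k ⬝ᵥ x with hcdef
  have hrepr : ∀ k, b.repr (WithLp.toLp 2 x) k = c k := by
    intro k
    rw [b.repr_apply_apply, PiLp.inner_apply]
    simp only [RCLike.inner_apply, starRingEnd_apply, star_trivial, WithLp.ofLp_toLp, hcdef,
      hudef, dotProduct]
    exact Finset.sum_congr rfl fun i _ => by ring
  have hxdecomp : x = ∑ k, c k • u k := by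
    have hsum := b.sum_repr (WithLp.toLp 2 x)
    calc x = WithLp.ofLp (∑ k, b.repr (WithLp.toLp 2 x) k • b k : EuclideanSpace ℝ (Fin d)) := by
          rw [hsum]
    _ = ∑ k, c k • u k := by
        simp only [hrepr]
        simp [hudef, WithLp.ofLp_sum, WithLp.ofLp_smul]
  have hquad : x ⬝ᵥ (N *ᵥ x) = ∑ k, lam k * (c k)^2 := by
    conv_lhs => rw [hxdecomp]
    rw [mulVec_sum']
    have hterm : ∀ k, N *ᵥ (c k • u k) = (c k * lam k) • u k := by
      intro k
      rw [mulVec_smul, heigvec k, smul_smul]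
    simp only [hterm]
    rw [dotProduct_sum']
    refine Finset.sum_congr rfl fun k _ => ?_
    rw [sum_dotProduct']
    rw [Finset.sum_eq_single k]
    · rw [smul_dotProduct, dotProduct_smul, horth k k, if_pos rfl]
      simp only [smul_eq_mul, mul_one]
      ring
    · intro l _ hl
      rw [smul_dotProduct, dotProduct_smul, horth l k, if_neg hl]
      simp
    · intro hk; exact absurd (Finset.mem_univ k) hk
  rw [hquad]
  refine Finset.sum_nonpos fun k _ => ?_
  have hkk : lam k ≤ (lam k)^2 := by
    have h1 := hsq (u k)
    rw [heigvec k] at h1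
    have huu : u k ⬝ᵥ u k = 1 := by rw [horth k k, if_pos rfl]
    have hl : u k ⬝ᵥ (lam k • u k) = lam k := by
      rw [dotProduct_smul, smul_eq_mul, huu, mul_one]
    have hr : (lam k • u k) ⬝ᵥ (lam k • u k) = (lam k)^2 := by
      rw [smul_dotProduct, dotProduct_smul, huu]; simp; ring
    rw [hl, hr] at h1
    exact h1
  rcases le_or_gt (lam k) 0 with hneg|hpos
  · exact mul_nonpos_of_nonpos_of_nonneg hneg (sq_nonneg _)
  · have h1 : 1 ≤ lam k := by nlinarith
    obtain ⟨c0, hc0⟩ := heig (u k) (lam k) (heigvec k) h1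
    have hck : c k = 0 := by
      show u k ⬝ᵥ x = 0
      rw [hc0, smul_dotProduct, smul_eq_mul, dotProduct_comm, hxz, mul_zero]
    rw [hck]
    simp

/-- **The local–global principle for hyperbolic matrices.**  Let `M` be a nonnegative
symmetric matrix, irreducible on its support, and let `h` be a nonnegative vector which is
strictly positive on the support of `M`.  If matrices `M⟨i⟩` and linear maps `T⟨i⟩`
satisfy the inheritance and pullback properties, and each `M⟨i⟩` is hyperbolic, then `M`
is hyperbolic. -/
theorem local_global_principle {d : ℕ}
    (M : Matrix (Fin d) (Fin d) ℝ)
    (hMsym : M.IsSymm)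
    (hMnn : ∀ i j, 0 ≤ M i j)
    (h : Fin d → ℝ)
    (hhnn : ∀ i, 0 ≤ h i)
    (hhpos : ∀ i ∈ matSupp M, 0 < h i)
    (hirr : ∀ i ∈ matSupp M, ∀ j ∈ matSupp M,
      Relation.ReflTransGen (fun a b => M a b ≠ 0) i j)
    (Mi : Fin d → Matrix (Fin d) (Fin d) ℝ)
    (hMinn : ∀ i ∈ matSupp M, ∀ a b, 0 ≤ Mi i a b)
    (hMisym : ∀ i ∈ matSupp M, (Mi i).IsSymm)
    (T : Fin d → (Fin d → ℝ) →ₗ[ℝ] (Fin d → ℝ))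
    (hInh : ∀ i ∈ matSupp M, ∀ v : Fin d → ℝ,
      M.mulVec v i = (T i v) ⬝ᵥ (Mi i).mulVec (T i h))
    (hPull : ∀ v : Fin d → ℝ,
      v ⬝ᵥ M.mulVec v ≤ ∑ i ∈ matSupp M, h i * ((T i v) ⬝ᵥ (Mi i).mulVec (T i v)))
    (hHyp : ∀ i ∈ matSupp M, IsHyperbolic (Mi i)) :
    IsHyperbolic M := by
  intro v w hww
  set S := matSupp M with hSdef
  have hmem : ∀ i, i ∈ S ↔ ∃ j, M i j ≠ 0 := by
    intro i; simp [hSdef, matSupp]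
  have hMsymE : ∀ i j, M i j = M j i := by
    intro i j
    have := congrFun (congrFun hMsym j) i
    rwa [Matrix.transpose_apply] at this
  have hrowM : ∀ i, i ∉ S → ∀ j, M i j = 0 := by
    intro i hi j
    by_contra hne
    exact hi ((hmem i).mpr ⟨j, hne⟩)
  have hcolM : ∀ j, j ∉ S → ∀ i, M i j = 0 := by
    intro j hj i
    rw [hMsymE i j]
    exact hrowM j hj i
  -- mulVec of anything vanishes off S
  have hMv0 : ∀ (x : Fin d → ℝ) i, i ∉ S → (M *ᵥ x) i = 0 := by
    intro x i hi
    simp only [mulVec, dotProduct]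
    exact Finset.sum_eq_zero fun j _ => by rw [hrowM i hi j, zero_mul]
  -- (Mh) is positive on S
  have hMhnn : ∀ i, 0 ≤ (M *ᵥ h) i := by
    intro i
    simp only [mulVec, dotProduct]
    exact Finset.sum_nonneg fun j _ => mul_nonneg (hMnn i j) (hhnn j)
  have hMhpos : ∀ i ∈ S, 0 < (M *ᵥ h) i := by
    intro i hi
    obtain ⟨j, hj⟩ := (hmem i).mp hi
    have hjS : j ∈ S := (hmem j).mpr ⟨i, by rw [hMsymE j i]; exact hj⟩
    have hMij : 0 < M i j := lt_of_le_of_ne (hMnn i j) (Ne.symm hj)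
    have : 0 < M i j * h j := mul_pos hMij (hhpos j hjS)
    simp only [mulVec, dotProduct]
    exact Finset.sum_pos' (fun l _ => mul_nonneg (hMnn i l) (hhnn l))
      ⟨j, Finset.mem_univ j, this⟩
  -- the scaling factors
  set e : Fin d → ℝ := fun i => if i ∈ S then Real.sqrt ((M *ᵥ h) i / h i) else 1 with hedef
  have hepos : ∀ i, 0 < e i := by
    intro i
    by_cases hi : i ∈ S
    · simp only [hedef, if_pos hi]
      exact Real.sqrt_pos.mpr (div_pos (hMhpos i hi) (hhpos i hi))
    · simp [hedef, if_neg hi]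
  have he2 : ∀ i ∈ S, e i ^ 2 * h i = (M *ᵥ h) i := by
    intro i hi
    have : e i ^ 2 = (M *ᵥ h) i / h i := by
      simp only [hedef, if_pos hi]
      exact Real.sq_sqrt (div_nonneg (hMhnn i) (hhnn i))
    rw [this, div_mul_cancel₀ _ (hhpos i hi).ne']
  -- the rescaled matrix and its Perron vector
  set N : Matrix (Fin d) (Fin d) ℝ := Matrix.of (fun i j => M i j / (e i * e j)) with hNdef
  have hNapp : ∀ i j, N i j = M i j / (e i * e j) := fun i j => rfl
  set z : Fin d → ℝ := fun i => if i ∈ S then e i * h i else 0 with hzdef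
  have hNnn : ∀ i j, 0 ≤ N i j := fun i j =>
    div_nonneg (hMnn i j) (mul_nonneg (hepos i).le (hepos j).le)
  have hNne : ∀ i j, (N i j ≠ 0 ↔ M i j ≠ 0) := by
    intro i j
    rw [hNapp]
    constructor
    · intro hne h0; exact hne (by rw [h0, zero_div])
    · intro hne h0
      rw [div_eq_zero_iff] at h0
      rcases h0 with h0|h0
      · exact hne h0
      · exact absurd h0 (mul_pos (hepos i) (hepos j)).ne'
  have hNsymm : N.IsSymm := by
    ext i j
    rw [Matrix.transpose_apply, hNapp, hNapp, hMsymE j i, mul_comm]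
  have hzpos : ∀ i ∈ S, 0 < z i := by
    intro i hi
    simp only [hzdef, if_pos hi]
    exact mul_pos (hepos i) (hhpos i hi)
  have hz0 : ∀ i ∉ S, z i = 0 := by
    intro i hi; simp [hzdef, if_neg hi]
  have hrowN : ∀ i ∉ S, ∀ j, N i j = 0 := by
    intro i hi j
    rw [hNapp, hrowM i hi j, zero_div]
  -- N z = z
  have hNz : N *ᵥ z = z := by
    funext i
    have hterm : ∀ j, N i j * z j = M i j * h j / e i := by
      intro j
      by_cases hj : j ∈ S
      · rw [hNapp]
        simp only [hzdef, if_pos hj]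
        rw [div_mul_eq_mul_div,
          div_eq_div_iff (mul_pos (hepos i) (hepos j)).ne' (hepos i).ne']
        ring
      · rw [hNapp, hcolM j hj i]
        simp [hzdef, if_neg hj]
    have : (N *ᵥ z) i = (M *ᵥ h) i / e i := by
      simp only [mulVec, dotProduct, hterm, Finset.sum_div]
    rw [this]
    by_cases hi : i ∈ S
    · have h2 := he2 i hi
      simp only [hzdef, if_pos hi]
      rw [← h2]
      rw [div_eq_iff (hepos i).ne']
      ring
    · rw [hMv0 h i hi, zero_div]
      simp [hzdef, if_neg hi]
  -- relating quadratic forms of N and M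
  have hNxi : ∀ (x : Fin d → ℝ) i, (N *ᵥ x) i = (M *ᵥ (fun j => x j / e j)) i / e i := by
    intro x i
    simp only [mulVec, dotProduct, Finset.sum_div]
    refine Finset.sum_congr rfl fun j _ => ?_
    rw [hNapp]
    rw [div_mul_eq_mul_div, ← mul_div_assoc, div_div, mul_comm (e j) (e i)]
  have hquadrel : ∀ x : Fin d → ℝ,
      x ⬝ᵥ (N *ᵥ x) = (fun j => x j / e j) ⬝ᵥ (M *ᵥ (fun j => x j / e j)) := by
    intro x
    simp only [dotProduct]
    refine Finset.sum_congr rfl fun i _ => ?_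
    rw [hNxi]
    rw [← mul_div_assoc, div_mul_eq_mul_div]
  -- key analytic inequality (from pullback + hyperbolicity of the Mi)
  have hkey : ∀ v0 : Fin d → ℝ,
      v0 ⬝ᵥ (M *ᵥ v0) ≤ ∑ i, ((M *ᵥ v0) i / e i)^2 := by
    intro v0
    have step1 := hPull v0
    have step2 : ∑ i ∈ S, h i * ((T i v0) ⬝ᵥ (Mi i).mulVec (T i v0))
        ≤ ∑ i ∈ S, ((M *ᵥ v0) i / e i)^2 := by
      refine Finset.sum_le_sum fun i hi => ?_
      have hb : 0 < (T i h) ⬝ᵥ (Mi i).mulVec (T i h) := by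
        rw [← hInh i hi h]
        exact hMhpos i hi
      have hyp := hHyp i hi (T i v0) (T i h) hb
      rw [← hInh i hi h, ← hInh i hi v0] at hyp
      -- hyp : (T i v0 ⬝ᵥ Mi i *ᵥ T i v0) * (M *ᵥ h) i ≤ ((M *ᵥ v0) i)^2
      have hq : (T i v0) ⬝ᵥ (Mi i).mulVec (T i v0) ≤ ((M *ᵥ v0) i)^2 / (M *ᵥ h) i :=
        (le_div_iff₀ (hMhpos i hi)).mpr hyp
      have hdiv : ((M *ᵥ v0) i / e i)^2 = h i * (((M *ᵥ v0) i)^2 / (M *ᵥ h) i) := by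
        rw [div_pow, ← he2 i hi]
        have he' := (hepos i).ne'
        have hh' := (hhpos i hi).ne'
        field_simp
      rw [hdiv]
      exact mul_le_mul_of_nonneg_left hq (hhnn i)
    have step3 : ∑ i ∈ S, ((M *ᵥ v0) i / e i)^2 ≤ ∑ i, ((M *ᵥ v0) i / e i)^2 := by
      refine Finset.sum_le_sum_of_subset_of_nonneg (Finset.subset_univ S) ?_
      intro i _ _
      exact sq_nonneg _
    exact le_trans step1 (le_trans step2 step3)
  -- N ≼ N²
  have hsq : ∀ x : Fin d → ℝ, x ⬝ᵥ (N *ᵥ x) ≤ (N *ᵥ x) ⬝ᵥ (N *ᵥ x) := by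
    intro x
    set v0 : Fin d → ℝ := fun j => x j / e j with hv0
    have h1 : x ⬝ᵥ (N *ᵥ x) = v0 ⬝ᵥ (M *ᵥ v0) := hquadrel x
    have h2 : (N *ᵥ x) ⬝ᵥ (N *ᵥ x) = ∑ i, ((M *ᵥ v0) i / e i)^2 := by
      simp only [dotProduct]
      refine Finset.sum_congr rfl fun i _ => ?_
      rw [hNxi x i]
      rw [sq]
    rw [h1, h2]
    exact hkey v0
  -- eigenvalue comparison
  have heig : ∀ (u : Fin d → ℝ) (μ : ℝ), N *ᵥ u = μ • u → 1 ≤ μ → ∃ c : ℝ, u = c • z := by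
    intro u μ hu hμ
    refine perron_aux N z S hNnn hzpos hz0 hrowN hNz ?_ u μ hu hμ
    intro i hi j hj
    have := hirr i hi j hj
    exact Relation.ReflTransGen.mono (fun a b hab => (hNne a b).mpr hab) _ _ this
  -- the crux: the form is nonpositive on the M-orthogonal complement of h
  have hcrux : ∀ v' : Fin d → ℝ, v' ⬝ᵥ (M *ᵥ h) = 0 → v' ⬝ᵥ (M *ᵥ v') ≤ 0 := by
    intro v' hv'
    set x : Fin d → ℝ := fun i => e i * v' i with hx
    have hxe : (fun j => x j / e j) = v' := by
      funext j
      simp only [hx]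
      have hej := (hepos j).ne'
      field_simp
    have hxz : x ⬝ᵥ z = 0 := by
      have : x ⬝ᵥ z = v' ⬝ᵥ (M *ᵥ h) := by
        simp only [dotProduct]
        refine Finset.sum_congr rfl fun i _ => ?_
        by_cases hi : i ∈ S
        · simp only [hx, hzdef, if_pos hi]
          rw [← he2 i hi]
          ring
        · simp only [hx, hzdef, if_neg hi]
          rw [hMv0 h i hi]
          ring
      rw [this, hv']
    have := spectral_aux N hNsymm z hsq heig x hxz
    calc v' ⬝ᵥ (M *ᵥ v') = x ⬝ᵥ (N *ᵥ x) := by rw [hquadrel x, hxe]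
    _ ≤ 0 := this
  -- symmetry of the M-form
  have hsymdot : ∀ a b : Fin d → ℝ, a ⬝ᵥ (M *ᵥ b) = b ⬝ᵥ (M *ᵥ a) := by
    intro a b
    simp only [dotProduct, mulVec, Finset.mul_sum]
    rw [Finset.sum_comm]
    refine Finset.sum_congr rfl fun i _ => Finset.sum_congr rfl fun j _ => ?_
    rw [hMsymE j i]
    ring
  -- final quadratic argument
  have hBh : w ⬝ᵥ (M *ᵥ h) ≠ 0 := by
    intro h0
    have := hcrux w h0
    linarith
  set A := w ⬝ᵥ (M *ᵥ w) with hA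
  set B := v ⬝ᵥ (M *ᵥ w) with hB
  set C := v ⬝ᵥ (M *ᵥ v) with hC
  set t : ℝ := -(v ⬝ᵥ (M *ᵥ h)) / (w ⬝ᵥ (M *ᵥ h)) with ht
  have hu0 : (v + t • w) ⬝ᵥ (M *ᵥ h) = 0 := by
    rw [add_dotProduct, smul_dotProduct, smul_eq_mul, ht]
    field_simp
    ring
  have huu : (v + t • w) ⬝ᵥ (M *ᵥ (v + t • w)) ≤ 0 := hcrux _ hu0
  have hexp : (v + t • w) ⬝ᵥ (M *ᵥ (v + t • w)) = C + 2*t*B + t^2*A := by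
    simp only [mulVec_add, mulVec_smul, dotProduct_add, add_dotProduct, smul_dotProduct,
      dotProduct_smul, smul_eq_mul]
    rw [hsymdot w v]
    ring
  rw [hexp] at huu
  have h9 : (C + 2*t*B + t^2*A) * A ≤ 0 := mul_nonpos_of_nonpos_of_nonneg huu hww.le
  nlinarith [sq_nonneg (B + t*A), h9, hww]
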